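/- Let α be a badly approximable real number (i.e., there exists C>0 such that ‖qα‖ ≥ C/q for all positive integers q, where ‖x‖ denotes distance to the nearest integer), and let θ > 1 be a real constant. Then for every real δ with 0 < δ ≤ 1/2, the sum over all positive integers m with ‖mα‖ < δ of 1/m^θ is O(δ^θ), with implied constant depending only on α and θ. -/

import Mathlib

open scoped Real

/-- Distance from a real number to the nearest integer. -/
noncomputable def nd (x : ℝ) : ℝ := |x - round x|

/-- A real number is badly approximable if `‖qα‖ ≥ C/q` for all positive integers `q`. -/
def BadlyApprox (α : ℝ) : Prop := ∃ C > 0, ∀ q : ℕ, 0 < q → C / q ≤ nd (q * α)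

lemma nd_nonneg (x : ℝ) : 0 ≤ nd x := abs_nonneg _

lemma nd_sub_le (x y : ℝ) : nd (x - y) ≤ nd x + nd y := by
  have h := round_le (x - y) (round x - round y)
  calc nd (x - y) ≤ |x - y - ((round x : ℝ) - (round y : ℝ))| := by
        simpa [nd] using h
    _ = |(x - round x) - (y - round y)| := by ring_nf
    _ ≤ |x - round x| + |y - round y| := abs_sub _ _
    _ = nd x + nd y := rfl

theorem stmt0 (α : ℝ) (hα : BadlyApprox α) (θ : ℝ) (hθ : 1 < θ) :
    ∃ K > 0, ∀ δ : ℝ, 0 < δ → δ ≤ 1 / 2 →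
      (∑' m : ℕ, if 0 < m ∧ nd (m * α) < δ then 1 / (m : ℝ) ^ θ else 0) ≤ K * δ ^ θ := by
  classical
  obtain ⟨C, hC, hbad⟩ := hα
  have hθ0 : 0 < θ := lt_trans one_pos hθ
  have hZsum : Summable (fun k : ℕ => 1 / (k : ℝ) ^ θ) :=
    Real.summable_one_div_nat_rpow.2 hθ
  set Z := ∑' k : ℕ, 1 / (k : ℝ) ^ θ with hZ
  have hZpos : 0 < Z := by
    refine Summable.tsum_pos hZsum (fun i => by positivity) 1 ?_
    norm_num
  refine ⟨(2 / C) ^ θ * Z, by positivity, ?_⟩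
  intro δ hδ hδ2
  set L : ℝ := C / (2 * δ) with hLdef
  have hLpos : 0 < L := by positivity
  set F : ℕ → ℝ := fun m => if 0 < m ∧ nd (m * α) < δ then 1 / (m : ℝ) ^ θ else 0 with hFdef
  have hFnonneg : ∀ m, 0 ≤ F m := by
    intro m
    simp only [hFdef]
    split <;> positivity
  -- every m in the support satisfies m > 2L
  have hkey : ∀ m : ℕ, 0 < m → nd (m * α) < δ → (2 : ℝ) * L < m := by
    intro m hm hmd
    have h1 : C / m ≤ nd (m * α) := hbad m hm
    have h2 : C / m < δ := lt_of_le_of_lt h1 hmd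
    have hm' : (0 : ℝ) < m := by exact_mod_cast hm
    have hCm : C < δ * m := by
      rw [div_lt_iff₀ hm'] at h2; linarith
    rw [hLdef, mul_div_assoc', div_lt_iff₀ (by positivity : (0 : ℝ) < 2 * δ)]
    nlinarith
  -- separation: distinct support elements differ by more than L
  have hsep : ∀ m m' : ℕ, m < m' → nd (m * α) < δ → nd (m' * α) < δ → L < (m' : ℝ) - m := by
    intro m m' hlt hm hm'
    have hq : 0 < m' - m := Nat.sub_pos_of_lt hlt
    have h1 : C / ((m' - m : ℕ) : ℝ) ≤ nd (((m' - m : ℕ) : ℝ) * α) := hbad _ hq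
    have hcast : ((m' - m : ℕ) : ℝ) = (m' : ℝ) - m := by
      push_cast [Nat.cast_sub hlt.le]; ring
    rw [hcast] at h1
    have h2 : nd (((m' : ℝ) - m) * α) ≤ nd (m' * α) + nd (m * α) := by
      rw [sub_mul]
      exact nd_sub_le _ _
    have h3 : C / ((m' : ℝ) - m) < 2 * δ := by
      have := le_trans h1 h2
      linarith
    have hd : (0 : ℝ) < (m' : ℝ) - m := by
      have : (m : ℝ) < m' := by exact_mod_cast hlt
      linarith
    rw [div_lt_iff₀ hd] at h3
    rw [hLdef, div_lt_iff₀ (by positivity : (0:ℝ) < 2 * δ)]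
    nlinarith
  -- summability of F
  have hFsum : Summable F := by
    refine Summable.of_nonneg_of_le hFnonneg (fun m => ?_) hZsum
    simp only [hFdef]
    split
    · exact le_rfl
    · positivity
  -- the set S
  set S : Set ℕ := {m | 0 < m ∧ nd (m * α) < δ} with hS
  have hmemS : ∀ m : S, 0 < (m : ℕ) ∧ nd ((m : ℕ) * α) < δ := by
    intro m
    exact m.2
  have hsupp : Function.support F ⊆ S := by
    intro m hm
    rw [Function.mem_support] at hm
    by_contra h
    apply hm
    have hnot : ¬ (0 < m ∧ nd (m * α) < δ) := by
      rwa [hS, Set.mem_setOf_eq] at h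
    simp only [hFdef, if_neg hnot]
  have htsub : (∑' m : S, F m) = ∑' m, F m :=
    tsum_subtype_eq_of_support_subset hsupp
  -- the dominating series
  set H : ℕ → ℝ := fun k => (2 / C) ^ θ * δ ^ θ * (1 / (k : ℝ) ^ θ) with hHdef
  have hHnonneg : ∀ k, 0 ≤ H k := fun k => by simp only [hHdef]; positivity
  have hHsum : Summable H := hZsum.mul_left _
  -- the injection i : S → ℕ
  set i : S → ℕ := fun m => ⌈((m : ℕ) : ℝ) / L⌉₊ - 1 with hidef
  have hiprop : ∀ m : S, 1 ≤ i m ∧ ((i m : ℝ)) * L < ((m : ℕ) : ℝ) ∧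
      ((m : ℕ) : ℝ) ≤ ((i m : ℝ) + 1) * L := by
    intro m
    obtain ⟨hm0, hmd⟩ := hmemS m
    have h2L : 2 * L < ((m : ℕ) : ℝ) := hkey (m : ℕ) hm0 hmd
    have hmL : (2 : ℝ) < ((m : ℕ) : ℝ) / L := by
      rw [lt_div_iff₀ hLpos]; linarith
    have hceil : 2 < ⌈((m : ℕ) : ℝ) / L⌉₊ := by
      rw [Nat.lt_ceil]; exact_mod_cast hmL
    have h1 : 1 ≤ i m := by
      simp only [hidef]; omega
    have hki : i m + 1 = ⌈((m : ℕ) : ℝ) / L⌉₊ := by simp only [hidef]; omega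
    refine ⟨h1, ?_, ?_⟩
    · have hlt : (i m : ℝ) < ((m : ℕ) : ℝ) / L := by
        have := (Nat.lt_ceil (n := i m) (a := ((m : ℕ) : ℝ) / L)).1 (by omega)
        exact this
      calc (i m : ℝ) * L < (((m : ℕ) : ℝ) / L) * L :=
            mul_lt_mul_of_pos_right hlt hLpos
        _ = ((m : ℕ) : ℝ) := by field_simp
    · have hle : ((m : ℕ) : ℝ) / L ≤ ((i m : ℝ) + 1) := by
        have h := Nat.le_ceil (((m : ℕ) : ℝ) / L)
        rw [← hki] at h
        push_cast at h
        linarith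
      calc ((m : ℕ) : ℝ) = (((m : ℕ) : ℝ) / L) * L := by field_simp
        _ ≤ ((i m : ℝ) + 1) * L := mul_le_mul_of_nonneg_right hle hLpos.le
  have hinj : Function.Injective i := by
    intro a b hii
    obtain ⟨h1, h2, h3⟩ := hiprop a
    obtain ⟨h1', h2', h3'⟩ := hiprop b
    apply Subtype.ext
    by_contra hne
    have hne' : (a : ℕ) ≠ (b : ℕ) := hne
    rcases Nat.lt_or_ge (a : ℕ) (b : ℕ) with h | h
    · have hsepr := hsep (a : ℕ) (b : ℕ) h (hmemS a).2 (hmemS b).2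
      have : ((b : ℕ) : ℝ) - ((a : ℕ) : ℝ) < L := by
        rw [hii] at h2
        nlinarith
      linarith
    · have hlt : (b : ℕ) < (a : ℕ) := lt_of_le_of_ne h (Ne.symm hne')
      have hsepr := hsep (b : ℕ) (a : ℕ) hlt (hmemS b).2 (hmemS a).2
      have : ((a : ℕ) : ℝ) - ((b : ℕ) : ℝ) < L := by
        rw [hii] at h3
        nlinarith [h2', h3]
      linarith
  -- term comparison
  have hcomp : ∀ m : S, F (m : ℕ) ≤ H (i m) := by
    intro m
    obtain ⟨hm0, hmd⟩ := hmemS m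
    obtain ⟨h1, h2, _⟩ := hiprop m
    have hif : F (m : ℕ) = 1 / (((m : ℕ) : ℝ)) ^ θ := by
      simp only [hFdef, if_pos (And.intro hm0 hmd)]
    rw [hif]
    simp only [hHdef]
    set k := i m with hk
    have hkpos : (0 : ℝ) < (k : ℝ) := by exact_mod_cast h1
    have hkL : (0 : ℝ) < (k : ℝ) * L := by positivity
    have hpow : ((k : ℝ) * L) ^ θ ≤ (((m : ℕ) : ℝ)) ^ θ :=
      Real.rpow_le_rpow hkL.le h2.le hθ0.le
    have hpowpos : (0 : ℝ) < ((k : ℝ) * L) ^ θ := Real.rpow_pos_of_pos hkL _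
    have hdiv : 1 / (((m : ℕ) : ℝ)) ^ θ ≤ 1 / ((k : ℝ) * L) ^ θ :=
      one_div_le_one_div_of_le hpowpos hpow
    have h1L : ((1 : ℝ)/L) ^ θ = 1 / L ^ θ := by
      rw [Real.div_rpow zero_le_one hLpos.le, Real.one_rpow]
    have h2L : (1/L : ℝ) = (2/C) * δ := by
      rw [hLdef, one_div_div]; ring
    have h3L : ((2/C) * δ : ℝ) ^ θ = (2/C) ^ θ * δ ^ θ :=
      Real.mul_rpow (by positivity) hδ.le
    calc 1 / (((m : ℕ) : ℝ)) ^ θ ≤ 1 / ((k : ℝ) * L) ^ θ := hdiv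
      _ = 1 / ((k : ℝ) ^ θ * L ^ θ) := by
          rw [Real.mul_rpow (Nat.cast_nonneg k) hLpos.le]
      _ = (1 / L ^ θ) * (1 / (k : ℝ) ^ θ) := by ring
      _ = (2/C) ^ θ * δ ^ θ * (1 / (k : ℝ) ^ θ) := by rw [← h1L, h2L, h3L]
  -- put it together
  have hmain : (∑' m, F m) ≤ ∑' k, H k := by
    rw [← htsub]
    exact Summable.tsum_le_tsum_of_inj i hinj (fun c _ => hHnonneg c) hcomp
      (hFsum.subtype _) hHsum
  have hHtsum : (∑' k, H k) = (2 / C) ^ θ * Z * δ ^ θ := by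
    rw [hHdef, tsum_mul_left, hZ]; ring
  calc (∑' m, F m) ≤ ∑' k, H k := hmain
    _ = (2 / C) ^ θ * Z * δ ^ θ := hHtsum
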